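/- (Upper bound on gradients of deep GraphCON-GCN.) Assume Δt ≤ 1/2 and N Γ Δt ≤ 1. Let the node features Xⁿ, Yⁿ be generated by the GraphCON-GCN recursion for n = 1,…,N from initial data X⁰, Y⁰ ∈ ℝ^v, and let J = (1/2v) Σ_{i=1}^v (X^N_i − X̄_i)² be the loss for a fixed target X̄ ∈ ℝ^v, regarded as a differentiable function of all weight entries. Then for every layer 1 ≤ ℓ ≤ N and every node 1 ≤ k ≤ v, the partial derivative of J with respect to the weight entry w^ℓ_k satisfies |∂J/∂w^ℓ_k| ≤ β' D̂ Δt (1 + N Γ Δt) (max_{1≤i≤v}(|X⁰_i| + |Y⁰_i|) + max_{1≤i≤v}|X̄_i| + β √(NΔt))². In particular the gradient is bounded independently of the number of layers N whenever Δt ∼ N^{−1}. -/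

import Mathlib

/-- One step of the GraphCON-GCN recursion, mapping the state
`Z = (X, Y) ∈ ℝ^v × ℝ^v` to the new state, for weight vector `wn`:
`C_i = (wn_i/d_i) X_i + ∑_{j∈N_i} wn_j X_j / √(d_i d_j)`,
`Y'_i = (1 − Δt) Y_i + Δt σ(C_i) − Δt X_i`, `X'_i = X_i + Δt Y'_i`. -/
noncomputable def gcnStep {v : ℕ} (G : SimpleGraph (Fin v)) [DecidableRel G.Adj]
    (d : Fin v → ℝ) (σ : ℝ → ℝ) (Δt : ℝ) (wn : Fin v → ℝ)
    (p : (Fin v → ℝ) × (Fin v → ℝ)) : (Fin v → ℝ) × (Fin v → ℝ) :=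
  let C : Fin v → ℝ := fun i =>
    wn i / d i * p.1 i + ∑ j ∈ G.neighborFinset i, wn j * p.1 j / Real.sqrt (d i * d j)
  let Ynew : Fin v → ℝ := fun i => (1 - Δt) * p.2 i + Δt * σ (C i) - Δt * p.1 i
  (fun i => p.1 i + Δt * Ynew i, Ynew)

/-- The final state `Z^N` of the GraphCON-GCN recursion run for `N` layers with weight
vectors `W 0, …, W (N−1)` from the initial state `Z0 = (X⁰, Y⁰)`. -/
noncomputable def gcnForward {v N : ℕ} (G : SimpleGraph (Fin v)) [DecidableRel G.Adj]
    (d : Fin v → ℝ) (σ : ℝ → ℝ) (Δt : ℝ) (W : Fin N → Fin v → ℝ)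
    (Z0 : (Fin v → ℝ) × (Fin v → ℝ)) : (Fin v → ℝ) × (Fin v → ℝ) :=
  (List.finRange N).foldl (fun p n => gcnStep G d σ Δt (W n) p) Z0

theorem energy_step (x y u Δt β : ℝ) (hu : |u| ≤ β) (h1 : 0 < Δt) (h2 : Δt ≤ 1/2) :
    ((x + Δt*((1-Δt)*y + Δt*u - Δt*x))^2 + ((1-Δt)*y + Δt*u - Δt*x)^2)
      ≤ (Real.sqrt (x^2+y^2) + 3/2*Δt*β)^2 := by
  have hb : 0 ≤ β := le_trans (abs_nonneg u) hu
  set s := Real.sqrt (x^2+y^2) with hsdef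
  have hs : s ^ 2 = x^2 + y^2 := Real.sq_sqrt (by positivity)
  have hs0 : 0 ≤ s := Real.sqrt_nonneg _
  have hx : |x| ≤ s := by
    rw [← Real.sqrt_sq_eq_abs]; exact Real.sqrt_le_sqrt (by nlinarith)
  have hy : |y| ≤ s := by
    rw [← Real.sqrt_sq_eq_abs]; exact Real.sqrt_le_sqrt (by nlinarith)
  have h3 := abs_le.mp hu
  have hyu : y*u ≤ β*s := by
    calc y*u ≤ |y| * |u| := le_trans (le_abs_self _) (le_of_eq (abs_mul _ _))
    _ ≤ s*β := mul_le_mul hy hu (abs_nonneg u) hs0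
    _ = β*s := mul_comm _ _
  have hxu : -(x*u) ≤ β*s := by
    calc -(x*u) ≤ |x*u| := neg_le_abs _
    _ = |x| * |u| := abs_mul _ _
    _ ≤ s*β := mul_le_mul hx hu (abs_nonneg u) hs0
    _ = β*s := mul_comm _ _
  have hbs : 0 ≤ β*s := mul_nonneg hb hs0
  have hΔ1 : 0 ≤ 1 - Δt := by linarith
  -- u-term bounds
  have hq : (0:ℝ) ≤ 1 - Δt + Δt^2 := by nlinarith [sq_nonneg Δt]
  
  have hΔsq : Δt^2 ≤ 1/4 := by nlinarith
  have hΔ3 : Δt*Δt^2 ≤ Δt*(1/4) := mul_le_mul_of_nonneg_left hΔsq h1.le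
  have hq2 : Δt*Δt ≤ Δt*(1/2) := mul_le_mul_of_nonneg_left h2 h1.le
  have hq4 : Δt^2*Δt^2 ≤ Δt^2*(1/4) := mul_le_mul_of_nonneg_left hΔsq (sq_nonneg Δt)
  have c1 : 2*Δt*(1-Δt)*(1+Δt^2) ≤ 2*Δt := by linarith [mul_nonneg (sq_nonneg Δt) hq]
  have c1' : 0 ≤ 2*Δt*(1-Δt)*(1+Δt^2) := by positivity
  have f1 : 2*Δt*(1-Δt)*(1+Δt^2)*(y*u) ≤ 2*Δt*(β*s) := by
    calc 2*Δt*(1-Δt)*(1+Δt^2)*(y*u) ≤ 2*Δt*(1-Δt)*(1+Δt^2)*(β*s) :=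
          mul_le_mul_of_nonneg_left hyu c1'
    _ ≤ 2*Δt*(β*s) := mul_le_mul_of_nonneg_right c1 hbs
  have c2 : 2*Δt^4 ≤ Δt := by linarith [hq4, hq2, sq_nonneg Δt, h1.le]
  have f2 : -(2*Δt^4)*(x*u) ≤ Δt*(β*s) := by
    calc -(2*Δt^4)*(x*u) = (2*Δt^4)*(-(x*u)) := by ring
    _ ≤ (2*Δt^4)*(β*s) := mul_le_mul_of_nonneg_left hxu (by positivity)
    _ ≤ Δt*(β*s) := mul_le_mul_of_nonneg_right c2 hbs
  have hu2 : u^2 ≤ β^2 := by nlinarith [h3.1, h3.2]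
  have f3 : Δt^2*(1+Δt^2)*u^2 ≤ (3/2)*(Δt^2*β^2) := by
    have c3 : Δt^2*(1+Δt^2) ≤ (3/2)*Δt^2 := by linarith [hq4, sq_nonneg Δt]
    calc Δt^2*(1+Δt^2)*u^2 ≤ Δt^2*(1+Δt^2)*β^2 := mul_le_mul_of_nonneg_left hu2 (by positivity)
    _ ≤ (3/2)*Δt^2*β^2 := mul_le_mul_of_nonneg_right c3 (sq_nonneg β)
    _ = (3/2)*(Δt^2*β^2) := by ring
  -- negative quadratic part
  have cy : -2*Δt + Δt^2*(1+(1-Δt)^2) + Δt^3*(1-Δt) ≤ 0 := by linarith [mul_nonneg h1.le (sq_nonneg (1-Δt))]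
  have cx : Δt^3*(1-Δt) - Δt^2*(1-Δt^2) ≤ 0 := by linarith [mul_nonneg (sq_nonneg Δt) hΔ1]
  have hsum : 0 ≤ Δt^3*(1-Δt)*(x+y)^2 := by positivity
  have fQ : (-2*Δt + Δt^2*(1+(1-Δt)^2))*y^2 - 2*Δt^3*(1-Δt)*(x*y) - Δt^2*(1-Δt^2)*x^2 ≤ 0 := by
    have e : (-2*Δt + Δt^2*(1+(1-Δt)^2))*y^2 - 2*Δt^3*(1-Δt)*(x*y) - Δt^2*(1-Δt^2)*x^2
        = (-2*Δt + Δt^2*(1+(1-Δt)^2) + Δt^3*(1-Δt))*y^2 + (Δt^3*(1-Δt) - Δt^2*(1-Δt^2))*x^2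
          - Δt^3*(1-Δt)*(x+y)^2 := by ring
    have p1 := mul_le_mul_of_nonneg_right cy (sq_nonneg y)
    have p2 := mul_le_mul_of_nonneg_right cx (sq_nonneg x)
    rw [e]; linarith [hsum, p1, p2]
  have hiden : (x + Δt*((1-Δt)*y + Δt*u - Δt*x))^2 + ((1-Δt)*y + Δt*u - Δt*x)^2
      = x^2 + y^2 + ((-2*Δt + Δt^2*(1+(1-Δt)^2))*y^2 - 2*Δt^3*(1-Δt)*(x*y) - Δt^2*(1-Δt^2)*x^2)
        + 2*Δt*(1-Δt)*(1+Δt^2)*(y*u) + -(2*Δt^4)*(x*u) + Δt^2*(1+Δt^2)*u^2 := by ring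
  have hexp : (s + 3/2*Δt*β)^2 = s^2 + 3*(Δt*(β*s)) + 9/4*(Δt^2*β^2) := by ring
  have hdtb : 0 ≤ Δt^2*β^2 := by positivity
  have hdbs : 0 ≤ Δt*(β*s) := by positivity
  linarith [f1, f2, f3, fQ, hiden, hexp, hs, hdtb, hdbs]


noncomputable def gcnIter {v : ℕ} (G : SimpleGraph (Fin v)) [DecidableRel G.Adj]
    (d : Fin v → ℝ) (σ : ℝ → ℝ) (Δt : ℝ) (w : ℕ → Fin v → ℝ)
    (Z0 : (Fin v → ℝ) × (Fin v → ℝ)) : ℕ → (Fin v → ℝ) × (Fin v → ℝ)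
  | 0 => Z0
  | n+1 => gcnStep G d σ Δt (w n) (gcnIter G d σ Δt w Z0 n)

theorem gcnForward_eq_gcnIter {v N : ℕ} (G : SimpleGraph (Fin v)) [DecidableRel G.Adj]
    (d : Fin v → ℝ) (σ : ℝ → ℝ) (Δt : ℝ) (W : Fin N → Fin v → ℝ)
    (Z0 : (Fin v → ℝ) × (Fin v → ℝ)) (w : ℕ → Fin v → ℝ)
    (hw : ∀ n : Fin N, w n.val = W n) :
    gcnForward G d σ Δt W Z0 = gcnIter G d σ Δt w Z0 N := by
  have key : ∀ m ≤ N, ((List.finRange N).take m).foldl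
      (fun p n => gcnStep G d σ Δt (W n) p) Z0 = gcnIter G d σ Δt w Z0 m := by
    intro m hm
    induction m with
    | zero => simp [gcnIter]
    | succ m ih =>
      have hmN : m < N := hm
      have htake : (List.finRange N).take (m+1)
          = (List.finRange N).take m ++ [⟨m, hmN⟩] := by
        rw [List.take_succ]
        congr 1
        rw [List.getElem?_eq_getElem (by simpa using hmN)]
        simp [List.getElem_finRange, Fin.cast]
      rw [htake, List.foldl_append, ih (le_of_lt hmN)]
      simp [gcnIter, hw ⟨m, hmN⟩]
  have := key N le_rfl
  rwa [List.take_of_length_le (by simp)] at this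

theorem sqrt_sq_add_sq_le (a b : ℝ) : Real.sqrt (a^2 + b^2) ≤ |a| + |b| := by
  rw [show |a| + |b| = Real.sqrt ((|a| + |b|)^2) from
    (Real.sqrt_sq (by positivity)).symm]
  apply Real.sqrt_le_sqrt
  nlinarith [mul_nonneg (abs_nonneg a) (abs_nonneg b), sq_abs a, sq_abs b]

theorem gcnIter_energy {v : ℕ} (G : SimpleGraph (Fin v)) [DecidableRel G.Adj]
    (d : Fin v → ℝ) (σ : ℝ → ℝ) (Δt β : ℝ)
    (hβ : ∀ x : ℝ, |σ x| ≤ β) (h1 : 0 < Δt) (h2 : Δt ≤ 1/2)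
    (w : ℕ → Fin v → ℝ) (Z0 : (Fin v → ℝ) × (Fin v → ℝ)) :
    ∀ (n : ℕ) (i : Fin v),
      Real.sqrt (((gcnIter G d σ Δt w Z0 n).1 i)^2 + ((gcnIter G d σ Δt w Z0 n).2 i)^2)
        ≤ Real.sqrt ((Z0.1 i)^2 + (Z0.2 i)^2) + 3/2*n*Δt*β := by
  have hb : 0 ≤ β := le_trans (abs_nonneg _) (hβ 0)
  intro n
  induction n with
  | zero => intro i; simp [gcnIter]
  | succ n ih =>
    intro i
    set p := gcnIter G d σ Δt w Z0 n with hp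
    have hstep := energy_step (p.1 i) (p.2 i)
      (σ (w n i / d i * p.1 i + ∑ j ∈ G.neighborFinset i, w n j * p.1 j / Real.sqrt (d i * d j)))
      Δt β (hβ _) h1 h2
    have h4 : Real.sqrt (((gcnIter G d σ Δt w Z0 (n+1)).1 i)^2
        + ((gcnIter G d σ Δt w Z0 (n+1)).2 i)^2)
        ≤ Real.sqrt ((p.1 i)^2 + (p.2 i)^2) + 3/2*Δt*β := by
      have : (gcnIter G d σ Δt w Z0 (n+1)).1 i
          = p.1 i + Δt*((1-Δt)*p.2 i + Δt*σ (w n i / d i * p.1 i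
            + ∑ j ∈ G.neighborFinset i, w n j * p.1 j / Real.sqrt (d i * d j)) - Δt*p.1 i) := by
        simp [gcnIter, gcnStep, hp]
      rw [this]
      have h5 : (gcnIter G d σ Δt w Z0 (n+1)).2 i
          = (1-Δt)*p.2 i + Δt*σ (w n i / d i * p.1 i
            + ∑ j ∈ G.neighborFinset i, w n j * p.1 j / Real.sqrt (d i * d j)) - Δt*p.1 i := by
        simp [gcnIter, gcnStep, hp]
      rw [h5]
      calc _ ≤ Real.sqrt ((Real.sqrt ((p.1 i)^2 + (p.2 i)^2) + 3/2*Δt*β)^2) :=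
            Real.sqrt_le_sqrt hstep
      _ = _ := Real.sqrt_sq (by positivity)
    calc _ ≤ Real.sqrt ((p.1 i)^2 + (p.2 i)^2) + 3/2*Δt*β := h4
    _ ≤ Real.sqrt ((Z0.1 i)^2 + (Z0.2 i)^2) + 3/2*n*Δt*β + 3/2*Δt*β := by linarith [ih i]
    _ = Real.sqrt ((Z0.1 i)^2 + (Z0.2 i)^2) + 3/2*(n+1 : ℕ)*Δt*β := by push_cast; ring


set_option maxHeartbeats 1000000 in
/-- **Upper bound on gradients of deep GraphCON-GCN.** Assume `Δt ≤ 1/2` and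
`NΓΔt ≤ 1`. With `J = (1/2v) ∑_i (X^N_i − X̄_i)²` the loss of the `N`-layer
GraphCON-GCN network regarded as a function of the weights, for every layer `ℓ` and node
`k` the partial derivative of `J` with respect to `w^ℓ_k` satisfies
`|∂J/∂w^ℓ_k| ≤ β' D̂ Δt (1 + NΓΔt)(max_i(|X⁰_i|+|Y⁰_i|) + max_i|X̄_i| + β√(NΔt))²`,
where `D̂ = max_{i,j} 1/√(d_i d_j)` and `Γ = 6 + 4β'D̂ max_n ‖wⁿ‖₁`. -/
theorem stmt_17 {v N : ℕ} (hv : 0 < v) (G : SimpleGraph (Fin v)) [DecidableRel G.Adj]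
    (d : Fin v → ℝ) (hd : ∀ i : Fin v, 1 ≤ d i)
    (Δt : ℝ) (hΔt : 0 < Δt) (hΔt2 : Δt ≤ 1 / 2)
    (σ : ℝ → ℝ) (hσdiff : Differentiable ℝ σ)
    (β β' : ℝ) (hβ : ∀ x : ℝ, |σ x| ≤ β) (hβ' : ∀ x : ℝ, |deriv σ x| ≤ β')
    (W : Fin N → Fin v → ℝ) (X0 Y0 Xbar : Fin v → ℝ)
    (Dhat Γ : ℝ)
    (hDhat : Dhat = ⨆ i : Fin v, ⨆ j : Fin v, 1 / Real.sqrt (d i * d j))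
    (hΓ : Γ = 6 + 4 * β' * Dhat * ⨆ n : Fin N, ∑ i : Fin v, |W n i|)
    (hNΓ : (N : ℝ) * Γ * Δt ≤ 1)
    (ℓ : Fin N) (k : Fin v) :
    let J : (Fin N → Fin v → ℝ) → ℝ := fun Wts =>
      (1 / (2 * (v : ℝ))) * ∑ i : Fin v, ((gcnForward G d σ Δt Wts (X0, Y0)).1 i - Xbar i) ^ 2
    ∃ Dg : ℝ,
      HasDerivAt (fun a : ℝ => J (Function.update W ℓ (Function.update (W ℓ) k a)))
          Dg (W ℓ k) ∧
        |Dg| ≤ β' * Dhat * Δt * (1 + (N : ℝ) * Γ * Δt) *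
          ((⨆ i : Fin v, (|X0 i| + |Y0 i|)) + (⨆ i : Fin v, |Xbar i|)
            + β * Real.sqrt ((N : ℝ) * Δt)) ^ 2 := by
  intro J
  set a₀ := W ℓ k with ha₀def
  -- basic nonnegativity facts
  have hβ0 : 0 ≤ β := le_trans (abs_nonneg _) (hβ 0)
  have hβ'0 : 0 ≤ β' := le_trans (abs_nonneg _) (hβ' 0)
  have hbddA : ∀ f : Fin v → ℝ, BddAbove (Set.range f) := fun f => (Set.finite_range f).bddAbove
  have hbddN : ∀ f : Fin N → ℝ, BddAbove (Set.range f) := fun f => (Set.finite_range f).bddAbove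
  have hd0 : ∀ i, (0:ℝ) < d i := fun i => lt_of_lt_of_le one_pos (hd i)
  have hsqpos : ∀ i j : Fin v, 0 < Real.sqrt (d i * d j) :=
    fun i j => Real.sqrt_pos.mpr (mul_pos (hd0 i) (hd0 j))
  have hDle : ∀ i j : Fin v, 1 / Real.sqrt (d i * d j) ≤ Dhat := by
    intro i j
    rw [hDhat]
    exact le_trans (le_ciSup (f := fun j => 1 / Real.sqrt (d i * d j)) (hbddA _) j)
      (le_ciSup (f := fun i => ⨆ j, 1 / Real.sqrt (d i * d j)) (hbddA _) i)
  have hdinv : ∀ i : Fin v, 1 / d i ≤ Dhat := by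
    intro i
    have h := hDle i i
    rwa [Real.sqrt_mul_self (hd0 i).le] at h
  have hDhat0 : 0 ≤ Dhat := le_trans (by positivity) (hDle ⟨0, hv⟩ ⟨0, hv⟩)
  set Ws := (⨆ n : Fin N, ∑ i : Fin v, |W n i|) with hWsdef
  clear_value Ws
  have hWsle : ∀ n : Fin N, ∑ i : Fin v, |W n i| ≤ Ws := fun n => by rw [hWsdef]; exact le_ciSup (f := fun n : Fin N => ∑ i : Fin v, |W n i|) (hbddN _) n
  have hWs0 : 0 ≤ Ws := le_trans (Finset.sum_nonneg fun i _ => abs_nonneg _) (hWsle ℓ)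
  have hbDW : 0 ≤ β' * Dhat * Ws := mul_nonneg (mul_nonneg hβ'0 hDhat0) hWs0
  have hΓ6 : 6 ≤ Γ := by rw [hΓ]; linarith
  have hNΔt0 : (0:ℝ) ≤ (N:ℝ) * Δt := by positivity
  have hNΔt : (N:ℝ) * Δt ≤ 1/6 := by
    have h := mul_le_mul_of_nonneg_left hΓ6 hNΔt0
    linarith
  set γ := 1 + β' * Dhat * Ws with hγdef
  clear_value γ
  have hγ1 : 1 ≤ γ := by rw [hγdef]; linarith
  have h2γ : 2 * γ ≤ Γ := by rw [hγdef, hΓ, hWsdef] at *; linarith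
  have hNγ : (N:ℝ) * (Δt * γ) ≤ 1/2 := by
    have h := mul_le_mul_of_nonneg_left h2γ hNΔt0
    linarith
  have hNΓΔt0 : (0:ℝ) ≤ (N:ℝ) * Γ * Δt :=
    mul_nonneg (mul_nonneg (Nat.cast_nonneg N) (by linarith)) hΔt.le
  -- sups over nodes
  set M0 := (⨆ i : Fin v, (|X0 i| + |Y0 i|)) with hM0def
  clear_value M0
  have hM0le : ∀ i, |X0 i| + |Y0 i| ≤ M0 := fun i => by rw [hM0def]; exact le_ciSup (f := fun i => |X0 i| + |Y0 i|) (hbddA _) i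
  have hM00 : 0 ≤ M0 := le_trans (by positivity) (hM0le ⟨0, hv⟩)
  set Xb := (⨆ i : Fin v, |Xbar i|) with hXbdef
  clear_value Xb
  have hXble : ∀ i, |Xbar i| ≤ Xb := fun i => by rw [hXbdef]; exact le_ciSup (f := fun i => |Xbar i|) (hbddA _) i
  have hXb0 : 0 ≤ Xb := le_trans (abs_nonneg _) (hXble ⟨0, hv⟩)
  set K := M0 + 3/2 * ((N:ℝ) * Δt) * β with hKdef
  clear_value K
  have hK0 : 0 ≤ K := by
    have : 0 ≤ 3/2 * ((N:ℝ) * Δt) * β := mul_nonneg (by linarith) hβ0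
    rw [hKdef]; linarith
  set T := (N:ℝ) * Δt with hTdef
  clear_value T
  have hsqT0 : 0 ≤ Real.sqrt T := Real.sqrt_nonneg _
  have hsqT : Real.sqrt T ≤ 2/3 := by
    rw [show (2/3 : ℝ) = Real.sqrt ((2/3)^2) from (Real.sqrt_sq (by norm_num)).symm]
    exact Real.sqrt_le_sqrt (by norm_num; linarith)
  have hTss : Real.sqrt T * Real.sqrt T = T := Real.mul_self_sqrt (by rw [hTdef]; positivity)
  have hKS : K ≤ M0 + β * Real.sqrt T := by
    have h := mul_nonneg (mul_nonneg hβ0 hsqT0) (by linarith : (0:ℝ) ≤ 2/3 - Real.sqrt T)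
    have hTssβ : β * (Real.sqrt T * Real.sqrt T) = β * T := by rw [hTss]
    rw [hKdef]
    nlinarith [h, hTssβ]
  -- the weight path and trajectory
  set wf : ℝ → ℕ → Fin v → ℝ := fun a n =>
    if h : n < N then Function.update W ℓ (Function.update (W ℓ) k a) ⟨n, h⟩ else 0 with hwfdef
  set Z : ℝ → ℕ → (Fin v → ℝ) × (Fin v → ℝ) := fun a => gcnIter G d σ Δt (wf a) (X0, Y0)
    with hZdef
  have hZsucc : ∀ a n, Z a (n+1) = gcnStep G d σ Δt (wf a n) (Z a n) := fun a n => rfl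
  have hwfc : ∀ (a : ℝ) (n : ℕ) (h : n < N), (⟨n, h⟩ : Fin N) ≠ ℓ → wf a n = W ⟨n, h⟩ := by
    intro a n h hne
    simp only [hwfdef, dif_pos h]
    exact Function.update_of_ne hne _ _
  have hwfl : ∀ a, wf a ℓ.val = Function.update (W ℓ) k a := by
    intro a
    simp only [hwfdef, dif_pos ℓ.isLt, Fin.eta, Function.update_self]
  have hconst : ∀ (a : ℝ) (n : ℕ), n ≤ ℓ.val → Z a n = Z a₀ n := by
    intro a n
    induction n with
    | zero => intro _; rfl
    | succ n ih =>
      intro hn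
      have h1 : n < N := by omega
      have hne : (⟨n, h1⟩ : Fin N) ≠ ℓ := by
        intro h
        have := congrArg Fin.val h
        simp at this; omega
      rw [hZsucc, hZsucc, hwfc a n h1 hne, hwfc a₀ n h1 hne, ih (by omega)]
  -- forward bounds
  have hfwd : ∀ n, n ≤ N → ∀ i, |(Z a₀ n).1 i| ≤ K ∧ |(Z a₀ n).2 i| ≤ K := by
    intro n hn i
    have h := gcnIter_energy G d σ Δt β hβ hΔt hΔt2 (wf a₀) (X0, Y0) n i
    have hX0b : Real.sqrt ((X0 i)^2 + (Y0 i)^2) ≤ M0 :=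
      le_trans (sqrt_sq_add_sq_le _ _) (hM0le i)
    have hcast : (n:ℝ) ≤ (N:ℝ) := Nat.cast_le.mpr hn
    have hstep : 3/2*(n:ℝ)*Δt*β ≤ 3/2 * T * β := by
      have h1 : (n:ℝ)*Δt ≤ T := by rw [hTdef]; exact mul_le_mul_of_nonneg_right hcast hΔt.le
      have h2 := mul_le_mul_of_nonneg_right h1 hβ0
      linarith
    have hnK : Real.sqrt (((Z a₀ n).1 i)^2 + ((Z a₀ n).2 i)^2) ≤ K := by
      rw [hKdef]
      calc Real.sqrt (((Z a₀ n).1 i)^2 + ((Z a₀ n).2 i)^2)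
          ≤ Real.sqrt ((X0 i)^2 + (Y0 i)^2) + 3/2*(n:ℝ)*Δt*β := h
      _ ≤ M0 + 3/2 * T * β := by linarith
    constructor
    · calc |(Z a₀ n).1 i| = Real.sqrt (((Z a₀ n).1 i)^2) := (Real.sqrt_sq_eq_abs _).symm
      _ ≤ Real.sqrt (((Z a₀ n).1 i)^2 + ((Z a₀ n).2 i)^2) :=
          Real.sqrt_le_sqrt (by linarith [sq_nonneg ((Z a₀ n).2 i)])
      _ ≤ K := hnK
    · calc |(Z a₀ n).2 i| = Real.sqrt (((Z a₀ n).2 i)^2) := (Real.sqrt_sq_eq_abs _).symm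
      _ ≤ Real.sqrt (((Z a₀ n).1 i)^2 + ((Z a₀ n).2 i)^2) :=
          Real.sqrt_le_sqrt (by linarith [sq_nonneg ((Z a₀ n).1 i)])
      _ ≤ K := hnK
  set m0 := Δt * (β' * (Dhat * K)) with hm0def
  clear_value m0
  have hm00 : 0 ≤ m0 := by
    rw [hm0def]; exact mul_nonneg hΔt.le (mul_nonneg hβ'0 (mul_nonneg hDhat0 hK0))
  have hγΔ0 : (0:ℝ) ≤ 1 + Δt * γ := by
    have := mul_nonneg hΔt.le (by linarith : (0:ℝ) ≤ γ)
    linarith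
  -- the main derivative induction
  have main : ∀ n, ℓ.val + 1 ≤ n → n ≤ N → ∃ DX DY : Fin v → ℝ,
      (∀ i, HasDerivAt (fun a => (Z a n).1 i) (DX i) a₀) ∧
      (∀ i, HasDerivAt (fun a => (Z a n).2 i) (DY i) a₀) ∧
      (∀ i, |DX i| ≤ m0 * (1 + Δt*γ)^(n - (ℓ.val+1))) ∧
      (∀ i, |DY i| ≤ m0 * (1 + Δt*γ)^(n - (ℓ.val+1))) := by
    intro n hn
    induction n, hn using Nat.le_induction with
    | base =>
      intro hN1
      set Xc := (Z a₀ ℓ.val).1 with hXcdef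
      set Yc := (Z a₀ ℓ.val).2 with hYcdef
      have hZC : ∀ a, Z a (ℓ.val+1)
          = gcnStep G d σ Δt (Function.update (W ℓ) k a) (Z a₀ ℓ.val) := by
        intro a; rw [hZsucc, hwfl, hconst a ℓ.val le_rfl]
      set Cf : Fin v → ℝ → ℝ := fun i a => Function.update (W ℓ) k a i / d i * Xc i
        + ∑ j ∈ G.neighborFinset i, Function.update (W ℓ) k a j * Xc j / Real.sqrt (d i * d j)
        with hCfdef
      set c : Fin v → ℝ := fun i => (if i = k then Xc k / d k else 0)
        + (if k ∈ G.neighborFinset i then Xc k / Real.sqrt (d i * d k) else 0) with hcdef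
      have hC : ∀ i, HasDerivAt (Cf i) (c i) a₀ := by
        intro i
        have h1 : HasDerivAt (fun a => Function.update (W ℓ) k a i / d i * Xc i)
            (if i = k then Xc k / d k else 0) a₀ := by
          by_cases hik : i = k
          · subst hik
            rw [if_pos rfl]
            have hfe : (fun a : ℝ => Function.update (W ℓ) i a i / d i * Xc i)
                = fun a => (Xc i / d i) * a := by
              funext a; rw [Function.update_self]; ring
            rw [hfe]
            simpa using (hasDerivAt_id a₀).const_mul (Xc i / d i)
          · rw [if_neg hik]
            have hfe : (fun a : ℝ => Function.update (W ℓ) k a i / d i * Xc i)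
                = fun _ => W ℓ i / d i * Xc i := by
              funext a; rw [Function.update_of_ne hik]
            rw [hfe]; exact hasDerivAt_const _ _
        have h2 : HasDerivAt (fun a => ∑ j ∈ G.neighborFinset i,
              Function.update (W ℓ) k a j * Xc j / Real.sqrt (d i * d j))
            (if k ∈ G.neighborFinset i then Xc k / Real.sqrt (d i * d k) else 0) a₀ := by
          have hterm : ∀ j ∈ G.neighborFinset i,
              HasDerivAt (fun a => Function.update (W ℓ) k a j * Xc j / Real.sqrt (d i * d j))
              (if j = k then Xc k / Real.sqrt (d i * d k) else 0) a₀ := by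
            intro j _
            by_cases hjk : j = k
            · subst hjk
              rw [if_pos rfl]
              have hfe : (fun a : ℝ => Function.update (W ℓ) j a j * Xc j / Real.sqrt (d i * d j))
                  = fun a => (Xc j / Real.sqrt (d i * d j)) * a := by
                funext a; rw [Function.update_self]; ring
              rw [hfe]
              simpa using (hasDerivAt_id a₀).const_mul (Xc j / Real.sqrt (d i * d j))
            · rw [if_neg hjk]
              have hfe : (fun a : ℝ => Function.update (W ℓ) k a j * Xc j / Real.sqrt (d i * d j))
                  = fun _ => W ℓ j * Xc j / Real.sqrt (d i * d j) := by
                funext a; rw [Function.update_of_ne hjk]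
              rw [hfe]; exact hasDerivAt_const _ _
          have hs := HasDerivAt.fun_sum hterm
          simpa only [Finset.sum_ite_eq' (G.neighborFinset i) k
            (fun _ => Xc k / Real.sqrt (d i * d k))] using hs
        exact h1.add h2
      have hXcK : ∀ i, |Xc i| ≤ K := fun i => (hfwd ℓ.val (le_of_lt ℓ.isLt) i).1
      have hcb : ∀ i, |c i| ≤ Dhat * K := by
        intro i
        have hDK : ∀ j : Fin v, |Xc k / Real.sqrt (d j * d k)| ≤ Dhat * K := by
          intro j
          rw [abs_div, abs_of_pos (hsqpos j k)]
          calc |Xc k| / Real.sqrt (d j * d k) = |Xc k| * (1 / Real.sqrt (d j * d k)) := by ring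
          _ ≤ K * Dhat := mul_le_mul (hXcK k) (hDle j k) (by positivity) hK0
          _ = Dhat * K := mul_comm _ _
        simp only [hcdef]
        by_cases hik : i = k
        · subst hik
          rw [if_pos rfl, if_neg (SimpleGraph.notMem_neighborFinset_self G i), add_zero]
          rw [abs_div, abs_of_pos (hd0 i)]
          calc |Xc i| / d i = |Xc i| * (1 / d i) := by ring
          _ ≤ K * Dhat := mul_le_mul (hXcK i) (hdinv i) (one_div_nonneg.mpr (hd0 i).le) hK0
          _ = Dhat * K := mul_comm _ _
        · rw [if_neg hik, zero_add]
          by_cases hk : k ∈ G.neighborFinset i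
          · rw [if_pos hk]; exact hDK i
          · rw [if_neg hk, abs_zero]; exact mul_nonneg hDhat0 hK0
      set DY1 : Fin v → ℝ := fun i => Δt * (deriv σ (Cf i a₀) * c i) with hDY1def
      have hYder : ∀ i, HasDerivAt (fun a => (Z a (ℓ.val+1)).2 i) (DY1 i) a₀ := by
        intro i
        have hfe : (fun a => (Z a (ℓ.val+1)).2 i)
            = fun a => (1 - Δt) * Yc i + Δt * σ (Cf i a) - Δt * Xc i := by
          funext a; rw [hZC a]; rfl
        rw [hfe]
        have hσc : HasDerivAt (fun a => σ (Cf i a)) (deriv σ (Cf i a₀) * c i) a₀ :=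
          (hσdiff (Cf i a₀)).hasDerivAt.comp a₀ (hC i)
        exact ((hσc.const_mul Δt).const_add ((1 - Δt) * Yc i)).sub_const (Δt * Xc i)
      have hXder : ∀ i, HasDerivAt (fun a => (Z a (ℓ.val+1)).1 i) (Δt * DY1 i) a₀ := by
        intro i
        have hfe : (fun a => (Z a (ℓ.val+1)).1 i)
            = fun a => Xc i + Δt * ((Z a (ℓ.val+1)).2 i) := by
          funext a; rw [hZC a]; rfl
        rw [hfe]
        exact ((hYder i).const_mul Δt).const_add (Xc i)
      have hDY1b : ∀ i, |DY1 i| ≤ m0 := by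
        intro i
        simp only [hDY1def]
        rw [hm0def, abs_mul, abs_of_pos hΔt, abs_mul]
        refine mul_le_mul_of_nonneg_left ?_ hΔt.le
        exact mul_le_mul (hβ' _) (hcb i) (abs_nonneg _) hβ'0
      have hpow0 : (ℓ.val + 1) - (ℓ.val + 1) = 0 := Nat.sub_self _
      refine ⟨fun i => Δt * DY1 i, DY1, hXder, hYder, ?_, ?_⟩
      · intro i
        rw [hpow0, pow_zero, mul_one, abs_mul, abs_of_pos hΔt]
        calc Δt * |DY1 i| ≤ 1 * |DY1 i| :=
          mul_le_mul_of_nonneg_right (by linarith) (abs_nonneg _)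
        _ = |DY1 i| := one_mul _
        _ ≤ m0 := hDY1b i
      · intro i; rw [hpow0, pow_zero, mul_one]; exact hDY1b i
    | succ n hn ih =>
      intro hN1
      have hnN : n < N := hN1
      obtain ⟨DX, DY, hX, hY, bX, bY⟩ := ih (le_of_lt hnN)
      set nn : Fin N := ⟨n, hnN⟩ with hnn
      have hne : nn ≠ ℓ := by
        intro h
        have := congrArg Fin.val h
        simp [hnn] at this; omega
      have hZn : ∀ a, Z a (n+1) = gcnStep G d σ Δt (W nn) (Z a n) := by
        intro a; rw [hZsucc, hwfc a n hnN hne]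
      set m := m0 * (1 + Δt*γ)^(n - (ℓ.val+1)) with hmdef
      clear_value m
      have hmnn : 0 ≤ m := hmdef ▸ mul_nonneg hm00 (pow_nonneg hγΔ0 _)
      have bX' : ∀ i, |DX i| ≤ m := bX
      have bY' : ∀ i, |DY i| ≤ m := bY
      set Cf : Fin v → ℝ → ℝ := fun i a => W nn i / d i * (Z a n).1 i
        + ∑ j ∈ G.neighborFinset i, W nn j * (Z a n).1 j / Real.sqrt (d i * d j) with hCfdef
      set DC : Fin v → ℝ := fun i => W nn i / d i * DX i
        + ∑ j ∈ G.neighborFinset i, W nn j * DX j / Real.sqrt (d i * d j) with hDCdef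
      have hCder : ∀ i, HasDerivAt (Cf i) (DC i) a₀ := by
        intro i
        have h1 : HasDerivAt (fun a => W nn i / d i * (Z a n).1 i)
            (W nn i / d i * DX i) a₀ := (hX i).const_mul _
        have h2 : HasDerivAt (fun a => ∑ j ∈ G.neighborFinset i,
              W nn j * (Z a n).1 j / Real.sqrt (d i * d j))
            (∑ j ∈ G.neighborFinset i, W nn j * DX j / Real.sqrt (d i * d j)) a₀ := by
          apply HasDerivAt.fun_sum
          intro j _
          exact ((hX j).const_mul (W nn j)).div_const _
        exact h1.add h2
      have hDCb : ∀ i, |DC i| ≤ Dhat * Ws * m := by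
        intro i
        simp only [hDCdef]
        have hterm : ∀ j : Fin v, |W nn j * DX j / Real.sqrt (d i * d j)|
            ≤ |W nn j| * (Dhat * m) := by
          intro j
          rw [abs_div, abs_of_pos (hsqpos i j), abs_mul]
          calc |W nn j| * |DX j| / Real.sqrt (d i * d j)
              = |W nn j| * (|DX j| * (1 / Real.sqrt (d i * d j))) := by ring
          _ ≤ |W nn j| * (m * Dhat) := by
              refine mul_le_mul_of_nonneg_left ?_ (abs_nonneg _)
              exact mul_le_mul (bX' j) (hDle i j) (by positivity) hmnn
          _ = |W nn j| * (Dhat * m) := by ring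
        have h1 : |W nn i / d i * DX i| ≤ |W nn i| * (Dhat * m) := by
          rw [abs_mul, abs_div, abs_of_pos (hd0 i)]
          calc |W nn i| / d i * |DX i| = |W nn i| * (|DX i| * (1 / d i)) := by ring
          _ ≤ |W nn i| * (m * Dhat) := by
              refine mul_le_mul_of_nonneg_left ?_ (abs_nonneg _)
              exact mul_le_mul (bX' i) (hdinv i) (one_div_nonneg.mpr (hd0 i).le) hmnn
          _ = |W nn i| * (Dhat * m) := by ring
        have h2 : |∑ j ∈ G.neighborFinset i, W nn j * DX j / Real.sqrt (d i * d j)|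
            ≤ ∑ j ∈ G.neighborFinset i, |W nn j| * (Dhat * m) :=
          le_trans (Finset.abs_sum_le_sum_abs _ _) (Finset.sum_le_sum fun j _ => hterm j)
        have h3 : |W nn i| * (Dhat * m) + ∑ j ∈ G.neighborFinset i, |W nn j| * (Dhat * m)
            = (∑ j ∈ insert i (G.neighborFinset i), |W nn j|) * (Dhat * m) := by
          rw [Finset.sum_insert (SimpleGraph.notMem_neighborFinset_self G i),
            add_mul, Finset.sum_mul]
        have h4 : (∑ j ∈ insert i (G.neighborFinset i), |W nn j|) ≤ Ws := by
          refine le_trans ?_ (hWsle nn)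
          exact Finset.sum_le_sum_of_subset_of_nonneg (Finset.subset_univ _)
            (fun j _ _ => abs_nonneg _)
        calc |W nn i / d i * DX i + ∑ j ∈ G.neighborFinset i, W nn j * DX j / Real.sqrt (d i * d j)|
            ≤ |W nn i / d i * DX i| + |∑ j ∈ G.neighborFinset i, W nn j * DX j / Real.sqrt (d i * d j)| :=
            abs_add_le _ _
        _ ≤ |W nn i| * (Dhat * m) + ∑ j ∈ G.neighborFinset i, |W nn j| * (Dhat * m) := by
            linarith [h1, h2]
        _ = (∑ j ∈ insert i (G.neighborFinset i), |W nn j|) * (Dhat * m) := h3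
        _ ≤ Ws * (Dhat * m) := mul_le_mul_of_nonneg_right h4 (mul_nonneg hDhat0 hmnn)
        _ = Dhat * Ws * m := by ring
      set DYn : Fin v → ℝ := fun i => (1-Δt) * DY i + Δt * (deriv σ (Cf i a₀) * DC i) - Δt * DX i
        with hDYndef
      have hYder : ∀ i, HasDerivAt (fun a => (Z a (n+1)).2 i) (DYn i) a₀ := by
        intro i
        have hfe : (fun a => (Z a (n+1)).2 i)
            = fun a => (1 - Δt) * (Z a n).2 i + Δt * σ (Cf i a) - Δt * (Z a n).1 i := by
          funext a; rw [hZn a]; rfl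
        rw [hfe]
        have hσc : HasDerivAt (fun a => σ (Cf i a)) (deriv σ (Cf i a₀) * DC i) a₀ :=
          (hσdiff (Cf i a₀)).hasDerivAt.comp a₀ (hCder i)
        exact (((hY i).const_mul (1-Δt)).add (hσc.const_mul Δt)).sub ((hX i).const_mul Δt)
      have hXder : ∀ i, HasDerivAt (fun a => (Z a (n+1)).1 i) (DX i + Δt * DYn i) a₀ := by
        intro i
        have hfe : (fun a => (Z a (n+1)).1 i)
            = fun a => (Z a n).1 i + Δt * ((Z a (n+1)).2 i) := by
          funext a; rw [hZn a]; rfl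
        rw [hfe]
        exact (hX i).add ((hYder i).const_mul Δt)
      have hDYnb : ∀ i, |DYn i| ≤ (1 + Δt * (β' * (Dhat * Ws))) * m := by
        intro i
        simp only [hDYndef]
        have h1 : |(1-Δt) * DY i| ≤ (1-Δt) * m := by
          rw [abs_mul, abs_of_nonneg (by linarith : (0:ℝ) ≤ 1 - Δt)]
          exact mul_le_mul_of_nonneg_left (bY' i) (by linarith)
        have h2 : |Δt * (deriv σ (Cf i a₀) * DC i)| ≤ Δt * (β' * (Dhat * Ws * m)) := by
          rw [abs_mul, abs_of_pos hΔt, abs_mul]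
          refine mul_le_mul_of_nonneg_left ?_ hΔt.le
          exact mul_le_mul (hβ' _) (hDCb i) (abs_nonneg _) hβ'0
        have h3 : |Δt * DX i| ≤ Δt * m := by
          rw [abs_mul, abs_of_pos hΔt]
          exact mul_le_mul_of_nonneg_left (bX' i) hΔt.le
        calc |(1-Δt) * DY i + Δt * (deriv σ (Cf i a₀) * DC i) - Δt * DX i|
            ≤ |(1-Δt) * DY i + Δt * (deriv σ (Cf i a₀) * DC i)| + |Δt * DX i| := abs_sub _ _
        _ ≤ |(1-Δt) * DY i| + |Δt * (deriv σ (Cf i a₀) * DC i)| + |Δt * DX i| := by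
            linarith [abs_add_le ((1-Δt) * DY i) (Δt * (deriv σ (Cf i a₀) * DC i))]
        _ ≤ (1 + Δt * (β' * (Dhat * Ws))) * m := by linarith [h1, h2, h3]
      have hexp : n + 1 - (ℓ.val+1) = (n - (ℓ.val+1)) + 1 := by omega
      have hnewm : (1 + Δt*γ) * m = m0 * (1 + Δt*γ)^(n + 1 - (ℓ.val+1)) := by
        rw [hexp, pow_succ, hmdef]; ring
      refine ⟨fun i => DX i + Δt * DYn i, DYn, hXder, hYder, ?_, ?_⟩
      · intro i
        rw [← hnewm]
        have h1 := hDYnb i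
        have h2 : |DX i + Δt * DYn i| ≤ |DX i| + Δt * |DYn i| := by
          calc |DX i + Δt * DYn i| ≤ |DX i| + |Δt * DYn i| := abs_add_le _ _
          _ = |DX i| + Δt * |DYn i| := by rw [abs_mul, abs_of_pos hΔt]
        have h3 := bX' i
        have h4 : 0 ≤ Δt * (β' * (Dhat * Ws)) :=
          mul_nonneg hΔt.le (mul_nonneg hβ'0 (mul_nonneg hDhat0 hWs0))
        have h5 : Δt * (β' * (Dhat * Ws)) ≤ β' * (Dhat * Ws) := by
          have := mul_le_mul_of_nonneg_right (by linarith : Δt ≤ 1) (by linarith : (0:ℝ) ≤ β' * (Dhat * Ws))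
          linarith
        have h5' : Δt * (β' * (Dhat * Ws)) * m ≤ β' * (Dhat * Ws) * m :=
          mul_le_mul_of_nonneg_right h5 hmnn
        have h7 := mul_le_mul_of_nonneg_left h5' hΔt.le
        have hmul := mul_le_mul_of_nonneg_left h1 hΔt.le
        rw [hγdef]
        linarith [h2, h3, hmul, h7]
      · intro i
        rw [← hnewm]
        have h1 := hDYnb i
        have hΔtm : 0 ≤ Δt * m := mul_nonneg hΔt.le hmnn
        calc |DYn i| ≤ (1 + Δt * (β' * (Dhat * Ws))) * m := h1
        _ ≤ (1 + Δt*γ) * m := by rw [hγdef]; linarith [hΔtm]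
  -- instantiate at N
  obtain ⟨DX, DY, hX, hY, bX, bY⟩ := main N ℓ.isLt le_rfl
  -- the derivative of the loss
  have hsum : HasDerivAt (fun a => ∑ i : Fin v, ((Z a N).1 i - Xbar i)^2)
      (∑ i : Fin v, ((2:ℕ):ℝ) * ((Z a₀ N).1 i - Xbar i)^(2-1) * DX i) a₀ :=
    HasDerivAt.fun_sum (fun i _ => ((hX i).sub_const (Xbar i)).pow 2)
  have hDg := hsum.const_mul (1 / (2 * (v:ℝ)))
  refine ⟨(1 / (2 * (v:ℝ))) * ∑ i : Fin v, ((2:ℕ):ℝ) * ((Z a₀ N).1 i - Xbar i)^(2-1) * DX i,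
    ?_, ?_⟩
  · have hgoalfun : (fun a : ℝ => J (Function.update W ℓ (Function.update (W ℓ) k a)))
        = fun a => (1 / (2 * (v:ℝ))) * ∑ i : Fin v, ((Z a N).1 i - Xbar i)^2 := by
      funext a
      show (1 / (2 * (v : ℝ))) * ∑ i : Fin v,
        ((gcnForward G d σ Δt (Function.update W ℓ (Function.update (W ℓ) k a)) (X0, Y0)).1 i
          - Xbar i) ^ 2 = _
      rw [gcnForward_eq_gcnIter G d σ Δt _ (X0, Y0) (wf a)
        (fun n => by simp only [hwfdef, dif_pos n.isLt, Fin.eta])]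
    rw [hgoalfun]
    exact hDg
  · -- the bound
    have hvR : (0:ℝ) < (v:ℝ) := by exact_mod_cast hv
    set mN := m0 * (1 + Δt*γ)^(N - (ℓ.val+1)) with hmNdef
    clear_value mN
    have hmN0 : 0 ≤ mN := hmNdef ▸ mul_nonneg hm00 (pow_nonneg hγΔ0 _)
    have hterm : ∀ i : Fin v, |((2:ℕ):ℝ) * ((Z a₀ N).1 i - Xbar i)^(2-1) * DX i|
        ≤ 2 * ((K + Xb) * mN) := by
      intro i
      have hE : |(Z a₀ N).1 i - Xbar i| ≤ K + Xb := by
        calc |(Z a₀ N).1 i - Xbar i| ≤ |(Z a₀ N).1 i| + |Xbar i| := abs_sub _ _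
        _ ≤ K + Xb := add_le_add (hfwd N le_rfl i).1 (hXble i)
      have hp1 : ((Z a₀ N).1 i - Xbar i) ^ (2-1) = (Z a₀ N).1 i - Xbar i := pow_one _
      rw [hp1, abs_mul, abs_mul, (by norm_num : |((2:ℕ):ℝ)| = (2:ℝ)), mul_assoc]
      refine mul_le_mul_of_nonneg_left ?_ (by norm_num)
      exact mul_le_mul hE (bX i) (abs_nonneg _) (add_nonneg hK0 hXb0)
    have hDgb : |(1 / (2 * (v:ℝ))) * ∑ i : Fin v, ((2:ℕ):ℝ) * ((Z a₀ N).1 i - Xbar i)^(2-1) * DX i|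
        ≤ (K + Xb) * mN := by
      rw [abs_mul, abs_of_pos (by positivity : (0:ℝ) < 1 / (2 * (v:ℝ)))]
      have h1 : |∑ i : Fin v, ((2:ℕ):ℝ) * ((Z a₀ N).1 i - Xbar i)^(2-1) * DX i|
          ≤ (v:ℝ) * (2 * ((K + Xb) * mN)) := by
        calc |∑ i : Fin v, ((2:ℕ):ℝ) * ((Z a₀ N).1 i - Xbar i)^(2-1) * DX i|
            ≤ ∑ i : Fin v, |((2:ℕ):ℝ) * ((Z a₀ N).1 i - Xbar i)^(2-1) * DX i| :=
            Finset.abs_sum_le_sum_abs _ _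
        _ ≤ ∑ _i : Fin v, 2 * ((K + Xb) * mN) := Finset.sum_le_sum fun i _ => hterm i
        _ = (v:ℝ) * (2 * ((K + Xb) * mN)) := by
            rw [Finset.sum_const, Finset.card_univ, Fintype.card_fin, nsmul_eq_mul]
      calc (1 / (2 * (v:ℝ))) * |∑ i : Fin v, ((2:ℕ):ℝ) * ((Z a₀ N).1 i - Xbar i)^(2-1) * DX i|
          ≤ (1 / (2 * (v:ℝ))) * ((v:ℝ) * (2 * ((K + Xb) * mN))) :=
          mul_le_mul_of_nonneg_left h1 (by positivity)
      _ = (K + Xb) * mN := by field_simp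
    -- bound the power
    have hpow : (1 + Δt*γ)^(N - (ℓ.val+1)) ≤ 1 + (N:ℝ) * Γ * Δt := by
      have hx0 : 0 ≤ Δt * γ := mul_nonneg hΔt.le (by linarith)
      have h1 : (1 + Δt*γ)^(N - (ℓ.val+1)) ≤ (1 + Δt*γ)^N :=
        pow_le_pow_right₀ (by linarith) (Nat.sub_le _ _)
      have h2 : (1 + Δt*γ)^N ≤ Real.exp (Δt*γ) ^ N :=
        pow_le_pow_left₀ hγΔ0 (by linarith [Real.add_one_le_exp (Δt*γ)]) N
      have h3 : Real.exp (Δt*γ) ^ N = Real.exp ((N:ℝ) * (Δt*γ)) := (Real.exp_nat_mul _ N).symm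
      set t := (N:ℝ) * (Δt*γ) with htdef
      have ht0 : 0 ≤ t := mul_nonneg (Nat.cast_nonneg N) hx0
      have ht12 : t ≤ 1/2 := hNγ
      have hexp2 : Real.exp t ≤ 1 + 2*t := by
        have he : Real.exp t * (1 - t) ≤ 1 := by
          have hle : 1 - t ≤ Real.exp (-t) := by linarith [Real.add_one_le_exp (-t)]
          calc Real.exp t * (1 - t) ≤ Real.exp t * Real.exp (-t) :=
              mul_le_mul_of_nonneg_left hle (Real.exp_pos t).le
          _ = 1 := by rw [← Real.exp_add]; simp
        have h4 : Real.exp t * (1 - t) ≤ (1 + 2*t) * (1 - t) := by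
          have : (0:ℝ) ≤ t * (1 - 2*t) := mul_nonneg ht0 (by linarith)
          linarith [he]
        exact le_of_mul_le_mul_right (by linarith [h4]) (by linarith : (0:ℝ) < 1 - t)
      have h2t : 2*t ≤ (N:ℝ) * Γ * Δt := by
        have h := mul_le_mul_of_nonneg_left h2γ hNΔt0
        rw [hTdef] at h
        rw [htdef]; linarith
      calc (1 + Δt*γ)^(N - (ℓ.val+1)) ≤ Real.exp t := by rw [← h3]; exact le_trans h1 h2
      _ ≤ 1 + 2*t := hexp2
      _ ≤ 1 + (N:ℝ) * Γ * Δt := by linarith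
    have hmNb : mN ≤ m0 * (1 + (N:ℝ) * Γ * Δt) := by
      rw [hmNdef]
      exact mul_le_mul_of_nonneg_left hpow hm00
    have hfinal : (K + Xb) * mN ≤ β' * Dhat * Δt * (1 + (N:ℝ) * Γ * Δt)
        * (M0 + Xb + β * Real.sqrt T) ^ 2 := by
      have hS0 : K ≤ M0 + β * Real.sqrt T := hKS
      have hS0' : 0 ≤ M0 + β * Real.sqrt T := le_trans hK0 hS0
      have hKXb : K + Xb ≤ M0 + Xb + β * Real.sqrt T := by linarith
      have hstep1 : (K + Xb) * mN ≤ (K + Xb) * (m0 * (1 + (N:ℝ) * Γ * Δt)) :=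
        mul_le_mul_of_nonneg_left hmNb (add_nonneg hK0 hXb0)
      have hKK : K * (K + Xb) ≤ (M0 + Xb + β * Real.sqrt T) ^ 2 := by
        have h9 : K * (K + Xb) ≤ (M0 + Xb + β * Real.sqrt T) * (M0 + Xb + β * Real.sqrt T) :=
          mul_le_mul (le_trans hS0 (by linarith)) hKXb (add_nonneg hK0 hXb0) (by linarith)
        calc K * (K + Xb) ≤ (M0 + Xb + β * Real.sqrt T) * (M0 + Xb + β * Real.sqrt T) := h9
        _ = (M0 + Xb + β * Real.sqrt T) ^ 2 := (sq _).symm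
      have hiden : (K + Xb) * (m0 * (1 + (N:ℝ) * Γ * Δt))
          = (β' * Dhat * Δt * (1 + (N:ℝ) * Γ * Δt)) * (K * (K + Xb)) := by
        rw [hm0def]; ring
      have hP0 : 0 ≤ β' * Dhat * Δt * (1 + (N:ℝ) * Γ * Δt) := by
        have : (0:ℝ) ≤ 1 + (N:ℝ)*Γ*Δt := by linarith
        exact mul_nonneg (mul_nonneg (mul_nonneg hβ'0 hDhat0) hΔt.le) this
      calc (K + Xb) * mN ≤ (K + Xb) * (m0 * (1 + (N:ℝ) * Γ * Δt)) := hstep1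
      _ = (β' * Dhat * Δt * (1 + (N:ℝ) * Γ * Δt)) * (K * (K + Xb)) := hiden
      _ ≤ (β' * Dhat * Δt * (1 + (N:ℝ) * Γ * Δt)) * (M0 + Xb + β * Real.sqrt T) ^ 2 :=
        mul_le_mul_of_nonneg_left hKK hP0
    calc |(1 / (2 * (v:ℝ))) * ∑ i : Fin v, ((2:ℕ):ℝ) * ((Z a₀ N).1 i - Xbar i)^(2-1) * DX i|
        ≤ (K + Xb) * mN := hDgb
    _ ≤ β' * Dhat * Δt * (1 + (N:ℝ) * Γ * Δt) * (M0 + Xb + β * Real.sqrt T) ^ 2 := hfinal
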